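/- Consider ℝ² with the Minkowski form ⟪(x,t),(x′,t′)⟫ = xx′ − tt′, and let B = {(x,t) ∈ ℝ² : x > 0 and xt ≥ 1}. Then B is a convex body; its normal cone with respect to the Minkowski form is N = {(a,b) ∈ ℝ² : a > 0 and b < 0} (the open fourth quadrant, which is open, so int N = N); its recession cone is R = {(u,v) ∈ ℝ² : u ≥ 0 and v ≥ 0} (the closed first quadrant); and consequently (int N) ∩ R = ∅. -/
import Mathlib


open Set

/-- The Minkowski form on `ℝ²`: `⟪(x,t),(x',t')⟫ = x x' − t t'`. -/
def mink2 (p q : ℝ × ℝ) : ℝ := p.1 * q.1 - p.2 * q.2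

/-- The normal cone of a convex body `B ⊆ ℝ²` with respect to the Minkowski form. -/
def normalCone2 (B : Set (ℝ × ℝ)) : Set (ℝ × ℝ) :=
  {w | w ≠ 0 ∧ ∃ p ∈ frontier B, ∀ x ∈ B, 0 ≤ mink2 (x - p) w}

/-- The recession cone of a convex body `B ⊆ ℝ²`. -/
def recessionCone2 (B : Set (ℝ × ℝ)) : Set (ℝ × ℝ) :=
  {v | ∀ x ∈ B, ∀ t : ℝ, 0 ≤ t → x + t • v ∈ B}


lemma aux_convex : Convex ℝ {p : ℝ × ℝ | 0 < p.1 ∧ 1 ≤ p.1 * p.2} := by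
  rintro ⟨x1, y1⟩ ⟨hx1, hxy1⟩ ⟨x2, y2⟩ ⟨hx2, hxy2⟩ a b ha hb hab
  simp only [mem_setOf_eq, Prod.smul_mk, Prod.mk_add_mk, smul_eq_mul] at *
  have hy1 : 0 < y1 := by nlinarith
  have hy2 : 0 < y2 := by nlinarith
  constructor
  · rcases ha.eq_or_lt with h | h
    · have hb1 : b = 1 := by linarith
      simpa [← h, hb1] using hx2
    · nlinarith [mul_nonneg hb hx2.le]
  · have hsum : 2 ≤ x1*y2 + x2*y1 := by
      nlinarith [sq_nonneg (x1*y2 - x2*y1), mul_pos (mul_pos hx1 hy2) (mul_pos hx2 hy1),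
        mul_pos hx1 hy2, mul_pos hx2 hy1]
    nlinarith [mul_nonneg (mul_nonneg ha ha) (sub_nonneg.2 hxy1),
      mul_nonneg (mul_nonneg hb hb) (sub_nonneg.2 hxy2),
      mul_nonneg (mul_nonneg ha hb) (by linarith : (0:ℝ) ≤ x1*y2 + x2*y1 - 2)]

lemma aux_closed : IsClosed {p : ℝ × ℝ | 0 < p.1 ∧ 1 ≤ p.1 * p.2} := by
  have heq : {p : ℝ × ℝ | 0 < p.1 ∧ 1 ≤ p.1 * p.2} =
      {p : ℝ × ℝ | 1 ≤ p.1 * p.2} ∩ ({p : ℝ × ℝ | 0 ≤ p.1} ∩ {p : ℝ × ℝ | 0 ≤ p.2}) := by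
    ext ⟨x, y⟩
    simp only [mem_setOf_eq, mem_inter_iff]
    constructor
    · rintro ⟨hx, hxy⟩
      exact ⟨hxy, hx.le, by nlinarith⟩
    · rintro ⟨hxy, hx, hy⟩
      refine ⟨lt_of_le_of_ne hx ?_, hxy⟩
      rintro rfl
      simp at hxy; linarith
  rw [heq]
  exact (isClosed_le continuous_const (continuous_fst.mul continuous_snd)).inter
    ((isClosed_le continuous_const continuous_fst).inter
      (isClosed_le continuous_const continuous_snd))

lemma aux_int_nonempty : (interior {p : ℝ × ℝ | 0 < p.1 ∧ 1 ≤ p.1 * p.2}).Nonempty := by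
  refine ⟨(2, 2), ?_⟩
  rw [mem_interior]
  refine ⟨{p : ℝ × ℝ | 0 < p.1 ∧ 1 < p.1 * p.2}, ?_, ?_, by norm_num⟩
  · rintro ⟨x, y⟩ ⟨hx, hxy⟩; exact ⟨hx, hxy.le⟩
  · exact (isOpen_lt continuous_const continuous_fst).inter
      (isOpen_lt continuous_const (continuous_fst.mul continuous_snd))

lemma aux_not_interior (x0 y0 : ℝ) (hx : 0 < x0) (h : x0 * y0 ≤ 1) :
    ((x0, y0) : ℝ × ℝ) ∉ interior {p : ℝ × ℝ | 0 < p.1 ∧ 1 ≤ p.1 * p.2} := by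
  intro hmem
  rw [mem_interior_iff_mem_nhds, Metric.mem_nhds_iff] at hmem
  obtain ⟨ε, hε, hball⟩ := hmem
  have hq : ((x0, y0 - ε/2) : ℝ × ℝ) ∈ Metric.ball ((x0, y0) : ℝ × ℝ) ε := by
    rw [Metric.mem_ball, Prod.dist_eq]
    simp only [dist_self]
    rw [Real.dist_eq, show y0 - ε/2 - y0 = -(ε/2) by ring, abs_neg,
      abs_of_pos (by linarith), max_eq_right (by linarith)]
    linarith
  have h2 := hball hq
  simp only [mem_setOf_eq] at h2
  nlinarith [h2.2, mul_pos hx hε]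

def normalCone2' (B : Set (ℝ × ℝ)) : Set (ℝ × ℝ) :=
  {w | w ≠ 0 ∧ ∃ p ∈ frontier B, ∀ x ∈ B, 0 ≤ (x.1 - p.1) * w.1 - (x.2 - p.2) * w.2}

lemma aux_normal : normalCone2' {p : ℝ × ℝ | 0 < p.1 ∧ 1 ≤ p.1 * p.2} =
    {w : ℝ × ℝ | 0 < w.1 ∧ w.2 < 0} := by
  ext ⟨a, b⟩
  simp only [normalCone2', mem_setOf_eq]
  constructor
  · rintro ⟨hw0, ⟨x0, y0⟩, hpf, hmin⟩
    have hpB : ((x0, y0) : ℝ × ℝ) ∈ {p : ℝ × ℝ | 0 < p.1 ∧ 1 ≤ p.1 * p.2} := by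
      have := frontier_subset_closure hpf
      rwa [aux_closed.closure_eq] at this
    obtain ⟨hx0, hxy0⟩ := hpB
    have hy0 : 0 < y0 := by nlinarith
    -- b ≤ 0
    have hb0 : b ≤ 0 := by
      have := hmin (x0, y0 + 1) ⟨hx0, by simp only; nlinarith⟩
      simp only at this; linarith [this]
    -- a ≥ 0
    have ha0 : 0 ≤ a := by
      have := hmin (x0 + 1, y0) ⟨by simp only; linarith, by simp only; nlinarith⟩
      simp only at this; linarith [this]
    -- a > 0
    have ha : 0 < a := by
      rcases ha0.eq_or_lt with h | h
      · exfalso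
        have hq : ((2 / y0, y0 / 2) : ℝ × ℝ) ∈ {p : ℝ × ℝ | 0 < p.1 ∧ 1 ≤ p.1 * p.2} := by
          constructor
          · simp only; positivity
          · show 1 ≤ 2 / y0 * (y0 / 2)
            rw [show 2 / y0 * (y0 / 2) = 1 by field_simp]
        have h2 := hmin _ hq
        simp only [← h] at h2
        have hb : 0 ≤ b := by nlinarith
        have hbz : b = 0 := le_antisymm hb0 hb
        exact hw0 (by simp [← h, hbz, Prod.ext_iff])
      · exact h
    refine ⟨ha, ?_⟩
    -- b < 0
    rcases hb0.lt_or_eq with h | h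
    · exact h
    · exfalso
      have hq : ((x0 / 2, 2 * y0) : ℝ × ℝ) ∈ {p : ℝ × ℝ | 0 < p.1 ∧ 1 ≤ p.1 * p.2} := by
        constructor
        · simp only; linarith
        · simp only; nlinarith
      have h2 := hmin _ hq
      simp only [h] at h2
      nlinarith
  · rintro ⟨ha, hb⟩
    have hc : 0 < -b := by linarith
    set s := Real.sqrt a with hs_def
    set t := Real.sqrt (-b) with ht_def
    have hs : 0 < s := Real.sqrt_pos.2 ha
    have ht : 0 < t := Real.sqrt_pos.2 hc
    have hs2 : s ^ 2 = a := Real.sq_sqrt ha.le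
    have ht2 : t ^ 2 = -b := Real.sq_sqrt hc.le
    refine ⟨?_, (t / s, s / t), ?_, ?_⟩
    · intro h
      rw [Prod.ext_iff] at h
      exact ha.ne' h.1
    · rw [frontier, aux_closed.closure_eq]
      have hone : t / s * (s / t) = 1 := by field_simp
      exact ⟨⟨by positivity, by rw [show ((t/s, s/t) : ℝ × ℝ).1 * ((t/s, s/t) : ℝ × ℝ).2 = 1 from hone]⟩,
        aux_not_interior _ _ (by positivity) (by rw [hone])⟩
    · rintro ⟨q1, q2⟩ ⟨hq1, hq12⟩
      simp only at hq1 hq12 ⊢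
      have hq2 : 0 < q2 := by nlinarith
      set u := Real.sqrt q1 with hu_def
      set v := Real.sqrt q2 with hv_def
      have hu2 : u ^ 2 = q1 := Real.sq_sqrt hq1.le
      have hv2 : v ^ 2 = q2 := Real.sq_sqrt hq2.le
      have huv : 1 ≤ u * v := by
        rw [← Real.sqrt_mul hq1.le]
        have := Real.sqrt_le_sqrt hq12
        rwa [Real.sqrt_one] at this
      have hb2 : b = -t ^ 2 := by linarith
      have key : (q1 - t / s) * a - (q2 - s / t) * b =
          s ^ 2 * q1 + t ^ 2 * q2 - 2 * (s * t) := by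
        rw [← hs2, hb2]; field_simp; ring
      rw [key, ← hu2, ← hv2]
      nlinarith [sq_nonneg (s * u - t * v), mul_pos hs ht]

lemma aux_rec : recessionCone2 {p : ℝ × ℝ | 0 < p.1 ∧ 1 ≤ p.1 * p.2} =
    {v : ℝ × ℝ | 0 ≤ v.1 ∧ 0 ≤ v.2} := by
  ext ⟨u, w⟩
  simp only [recessionCone2, mem_setOf_eq]
  constructor
  · intro hrec
    have hu : 0 ≤ u := by
      by_contra hu
      push_neg at hu
      have htpos : (0:ℝ) ≤ -1/u := le_of_lt (div_pos_iff.mpr (Or.inr ⟨by norm_num, hu⟩))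
      have h := hrec (1, 1) ⟨by norm_num, by norm_num⟩ (-1/u) htpos
      obtain ⟨h1, -⟩ := h
      simp only [Prod.smul_mk, Prod.mk_add_mk, smul_eq_mul] at h1
      rw [div_mul_cancel₀ _ hu.ne] at h1
      norm_num at h1
    refine ⟨hu, ?_⟩
    by_contra hw
    push_neg at hw
    set s := max 1 ((u + 1) / (-w)) with hs_def
    have hs1 : (1:ℝ) ≤ s := le_max_left _ _
    have hs0 : 0 < s := by linarith
    have hs2 : (u + 1) / (-w) ≤ s := le_max_right _ _
    have hsw : u + 1 ≤ s * (-w) := by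
      rw [div_le_iff₀ (by linarith)] at hs2
      linarith
    have hinv : s * (1/s) = 1 := mul_one_div_cancel hs0.ne'
    have h := hrec (s, 1/s) ⟨hs0, hinv.ge⟩ 1 zero_le_one
    obtain ⟨-, h2⟩ := h
    simp only [Prod.smul_mk, Prod.mk_add_mk, smul_eq_mul, one_mul] at h2
    have key : s * ((s + u) * (1/s + w)) = (s + u) * (1 + s * w) := by
      rw [show s * ((s + u) * (1/s + w)) = (s + u) * (s * (1/s) + s * w) from by ring, hinv]
    have h3 : s ≤ (s + u) * (1 + s * w) := by
      rw [← key]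
      calc s = s * 1 := by ring
      _ ≤ s * ((s + u) * (1/s + w)) := by
          exact mul_le_mul_of_nonneg_left h2 hs0.le
    nlinarith [mul_nonneg hu (mul_pos hs0 (by linarith : 0 < -w)).le,
      mul_le_mul_of_nonneg_left hsw hs0.le]
  · rintro ⟨hu, hw⟩ ⟨x1, x2⟩ ⟨hx1, hx12⟩ t ht
    simp only [Prod.smul_mk, Prod.mk_add_mk, smul_eq_mul, mem_setOf_eq]
    have hx2 : 0 < x2 := by nlinarith
    constructor
    · nlinarith [mul_nonneg ht hu]
    · nlinarith [mul_nonneg (mul_nonneg ht hu) hx2.le, mul_nonneg (mul_nonneg ht hw) hx1.le,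
        mul_nonneg (mul_nonneg (mul_nonneg ht hu) ht) hw]

lemma aux_bridge (B : Set (ℝ × ℝ)) : normalCone2 B = normalCone2' B := rfl

lemma aux_Qopen : IsOpen {w : ℝ × ℝ | 0 < w.1 ∧ w.2 < 0} :=
  (isOpen_lt continuous_const continuous_fst).inter
    (isOpen_lt continuous_snd continuous_const)

theorem stmt_12 :
    Convex ℝ {p : ℝ × ℝ | 0 < p.1 ∧ 1 ≤ p.1 * p.2} ∧
    IsClosed {p : ℝ × ℝ | 0 < p.1 ∧ 1 ≤ p.1 * p.2} ∧
    (interior {p : ℝ × ℝ | 0 < p.1 ∧ 1 ≤ p.1 * p.2}).Nonempty ∧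
    normalCone2 {p : ℝ × ℝ | 0 < p.1 ∧ 1 ≤ p.1 * p.2} =
      {w : ℝ × ℝ | 0 < w.1 ∧ w.2 < 0} ∧
    interior (normalCone2 {p : ℝ × ℝ | 0 < p.1 ∧ 1 ≤ p.1 * p.2}) =
      normalCone2 {p : ℝ × ℝ | 0 < p.1 ∧ 1 ≤ p.1 * p.2} ∧
    recessionCone2 {p : ℝ × ℝ | 0 < p.1 ∧ 1 ≤ p.1 * p.2} =
      {v : ℝ × ℝ | 0 ≤ v.1 ∧ 0 ≤ v.2} ∧
    interior (normalCone2 {p : ℝ × ℝ | 0 < p.1 ∧ 1 ≤ p.1 * p.2}) ∩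
      recessionCone2 {p : ℝ × ℝ | 0 < p.1 ∧ 1 ≤ p.1 * p.2} = ∅ := by
  have hN : normalCone2 {p : ℝ × ℝ | 0 < p.1 ∧ 1 ≤ p.1 * p.2} =
      {w : ℝ × ℝ | 0 < w.1 ∧ w.2 < 0} := (aux_bridge _).trans aux_normal
  have hint : interior (normalCone2 {p : ℝ × ℝ | 0 < p.1 ∧ 1 ≤ p.1 * p.2}) =
      normalCone2 {p : ℝ × ℝ | 0 < p.1 ∧ 1 ≤ p.1 * p.2} := by
    rw [hN]; exact aux_Qopen.interior_eq
  refine ⟨aux_convex, aux_closed, aux_int_nonempty, hN, hint, aux_rec, ?_⟩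
  rw [hint, hN, aux_rec]
  ext ⟨a, b⟩
  simp only [mem_inter_iff, mem_setOf_eq, mem_empty_iff_false, iff_false]
  rintro ⟨⟨ha, hb⟩, hu, hv⟩
  linarith
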